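/- Suppose a differentiable function f : D → ℝ on an open set D ⊆ ℝᵈ admits an extended convex lifting (L, F, Φ) such that every point of D is non-degenerate (i.e., (x, f(x)) ∈ π(L) for all x ∈ D). Then every stationary point x* ∈ D with ∇f(x*) = 0 is a global minimizer of f over D. -/

import Mathlib

/-- ECL global-optimality certificate: if a differentiable function
`f : D → ℝ` on an open set `D ⊆ ℝᵈ` admits an extended convex lifting
`(L, F, Φ)` (with `epi_>(f) ⊆ π(L) ⊆ cl(epi_≥(f))`, `F` convex, `Φ` a `C²`
diffeomorphism from `L` to `F` whose first output equals the `γ`-component)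
such that every point of `D` is non-degenerate (`(x, f x) ∈ π(L)` for all
`x ∈ D`), then every stationary point `x* ∈ D` with `∇f(x*) = 0` is a
global minimizer of `f` over `D`. -/
theorem stmt_16 {d dξ N : ℕ}
    (D : Set (Fin d → ℝ)) (hD : IsOpen D)
    (f : (Fin d → ℝ) → ℝ) (hf : DifferentiableOn ℝ f D)
    (L : Set ((Fin d → ℝ) × ℝ × (Fin dξ → ℝ)))
    (F : Set (ℝ × (Fin N → ℝ))) (hF : Convex ℝ F)
    (Φ : (Fin d → ℝ) × ℝ × (Fin dξ → ℝ) → ℝ × (Fin N → ℝ))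
    (Ψ : ℝ × (Fin N → ℝ) → (Fin d → ℝ) × ℝ × (Fin dξ → ℝ))
    (hΦ : Set.BijOn Φ L F)
    (hΨ : ∀ p ∈ L, Ψ (Φ p) = p)
    (hΦsm : ContDiffOn ℝ 2 Φ L) (hΨsm : ContDiffOn ℝ 2 Ψ F)
    (hγ : ∀ p ∈ L, (Φ p).1 = p.2.1)
    (hlow : {q : (Fin d → ℝ) × ℝ | q.1 ∈ D ∧ f q.1 < q.2}
        ⊆ {q | ∃ ξ, (q.1, q.2, ξ) ∈ L})
    (hup : {q : (Fin d → ℝ) × ℝ | ∃ ξ, (q.1, q.2, ξ) ∈ L}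
        ⊆ closure {q : (Fin d → ℝ) × ℝ | q.1 ∈ D ∧ f q.1 ≤ q.2})
    (hnondeg : ∀ x ∈ D, ∃ ξ, (x, f x, ξ) ∈ L)
    (xs : Fin d → ℝ) (hxs : xs ∈ D) (hstat : fderiv ℝ f xs = 0) :
    ∀ x ∈ D, f xs ≤ f x := by

  -- Key fact: any point of L whose x-component lies in D has f x ≤ γ.
  have key : ∀ p ∈ L, p.1 ∈ D → f p.1 ≤ p.2.1 := by
    intro p hpL hpD
    have hpeq : (p.1, p.2.1, p.2.2) = p := by
      ext <;> rfl
    have hmem : (p.1, p.2.1) ∈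
        closure {q : (Fin d → ℝ) × ℝ | q.1 ∈ D ∧ f q.1 ≤ q.2} := by
      apply hup
      exact ⟨p.2.2, by rw [hpeq]; exact hpL⟩
    have hcont : ContinuousAt f p.1 :=
      (hf.differentiableAt (hD.mem_nhds hpD)).continuousAt
    have hcl : ClusterPt (p.1, p.2.1)
        (Filter.principal {q : (Fin d → ℝ) × ℝ | q.1 ∈ D ∧ f q.1 ≤ q.2}) :=
      mem_closure_iff_clusterPt.mp hmem
    have htend : Filter.Tendsto (fun q : (Fin d → ℝ) × ℝ => q.2 - f q.1)
        (nhds (p.1, p.2.1) ⊓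
          Filter.principal {q : (Fin d → ℝ) × ℝ | q.1 ∈ D ∧ f q.1 ≤ q.2})
        (nhds (p.2.1 - f p.1)) := by
      refine Filter.Tendsto.mono_left ?_ inf_le_left
      have h1 : ContinuousAt (fun q : (Fin d → ℝ) × ℝ => f q.1) (p.1, p.2.1) :=
        ContinuousAt.comp (x := ((p.1, p.2.1) : (Fin d → ℝ) × ℝ)) hcont continuousAt_fst
      exact (continuousAt_snd.sub h1).tendsto
    have hev : ∀ᶠ q in (nhds (p.1, p.2.1) ⊓
        Filter.principal {q : (Fin d → ℝ) × ℝ | q.1 ∈ D ∧ f q.1 ≤ q.2}),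
        (0:ℝ) ≤ q.2 - f q.1 := by
      refine Filter.eventually_inf_principal.mpr ?_
      exact Filter.Eventually.of_forall fun q hq => sub_nonneg.mpr hq.2
    haveI : (nhds ((p.1, p.2.1) : (Fin d → ℝ) × ℝ) ⊓
        Filter.principal {q : (Fin d → ℝ) × ℝ | q.1 ∈ D ∧ f q.1 ≤ q.2}).NeBot := hcl
    have : (0:ℝ) ≤ p.2.1 - f p.1 := ge_of_tendsto htend hev
    linarith
  intro x hx
  by_contra hlt
  push_neg at hlt
  obtain ⟨ξs, hLs⟩ := hnondeg xs hxs
  obtain ⟨ξx, hLx⟩ := hnondeg x hx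
  set q0 : ℝ × (Fin N → ℝ) := Φ (xs, f xs, ξs) with hq0
  set q1 : ℝ × (Fin N → ℝ) := Φ (x, f x, ξx) with hq1
  have hq0F : q0 ∈ F := hΦ.mapsTo hLs
  have hq1F : q1 ∈ F := hΦ.mapsTo hLx
  have hq01 : q0.1 = f xs := hγ _ hLs
  have hq11 : q1.1 = f x := hγ _ hLx
  set c : ℝ → ℝ × (Fin N → ℝ) := fun t => q0 + t • (q1 - q0) with hc
  have hcF : ∀ t ∈ Set.Icc (0:ℝ) 1, c t ∈ F := by
    intro t ht
    have := hF hq0F hq1F (by linarith [ht.2] : (0:ℝ) ≤ 1 - t) ht.1 (by ring)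
    have heq : (1 - t) • q0 + t • q1 = c t := by
      simp only [hc, smul_sub, sub_smul, one_smul]
      abel
    rwa [heq] at this
  have hc0 : c 0 = q0 := by simp [hc]
  -- properties of the lifted curve
  have hcL : ∀ t ∈ Set.Icc (0:ℝ) 1, Ψ (c t) ∈ L ∧ Φ (Ψ (c t)) = c t := by
    intro t ht
    obtain ⟨r, hrL, hr⟩ := hΦ.surjOn (hcF t ht)
    have : Ψ (c t) = r := by rw [← hr, hΨ r hrL]
    rw [this, hr]
    exact ⟨hrL, rfl⟩
  have hγcurve : ∀ t ∈ Set.Icc (0:ℝ) 1,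
      (Ψ (c t)).2.1 = f xs + t * (f x - f xs) := by
    intro t ht
    obtain ⟨hmL, hfix⟩ := hcL t ht
    have h1 : (Φ (Ψ (c t))).1 = (Ψ (c t)).2.1 := hγ _ hmL
    rw [hfix] at h1
    rw [← h1]
    simp only [hc, Prod.fst_add, Prod.smul_fst, Prod.fst_sub, smul_eq_mul]
    rw [hq01, hq11]
  set X : ℝ → (Fin d → ℝ) := fun t => (Ψ (c t)).1 with hX
  have hX0 : X 0 = xs := by
    have : Ψ (c 0) = (xs, f xs, ξs) := by rw [hc0, hq0, hΨ _ hLs]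
    simp [hX, this]
  -- differentiability of the curve at 0 within Icc
  have hcdiff : DifferentiableWithinAt ℝ c (Set.Icc (0:ℝ) 1) 0 :=
    (((differentiable_const q0).add
      (differentiable_id.smul (differentiable_const (q1 - q0)))) (0:ℝ)).differentiableWithinAt
  have hΨdiff : DifferentiableWithinAt ℝ Ψ F q0 :=
    (hΨsm.differentiableOn (by norm_num)) q0 hq0F
  have hΨdiff' : DifferentiableWithinAt ℝ Ψ F (c 0) := by rw [hc0]; exact hΨdiff
  have hpdiff : DifferentiableWithinAt ℝ (fun t => Ψ (c t)) (Set.Icc (0:ℝ) 1) 0 :=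
    hΨdiff'.comp 0 hcdiff (fun t ht => hcF t ht)
  have hXdiff : DifferentiableWithinAt ℝ X (Set.Icc (0:ℝ) 1) 0 := hpdiff.fst
  -- derivative of g
  set v : Fin d → ℝ := derivWithin X (Set.Icc (0:ℝ) 1) 0 with hv
  have hXd : HasDerivWithinAt X v (Set.Icc (0:ℝ) 1) 0 := hXdiff.hasDerivWithinAt
  have hfd : HasFDerivAt f (0 : (Fin d → ℝ) →L[ℝ] ℝ) xs := by
    have := (hf.differentiableAt (hD.mem_nhds hxs)).hasFDerivAt
    rwa [hstat] at this
  have hfd' : HasFDerivAt f (0 : (Fin d → ℝ) →L[ℝ] ℝ) (X 0) := by rw [hX0]; exact hfd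
  have hfX : HasDerivWithinAt (fun t => f (X t)) 0 (Set.Icc (0:ℝ) 1) 0 := by
    have := HasFDerivAt.comp_hasDerivWithinAt (0:ℝ) hfd' hXd
    simpa [Function.comp_def] using this
  set g : ℝ → ℝ := fun t => f (X t) - (f xs + t * (f x - f xs)) with hg
  have hγd : HasDerivWithinAt (fun t : ℝ => f xs + t * (f x - f xs))
      (f x - f xs) (Set.Icc (0:ℝ) 1) 0 := by
    have : HasDerivAt (fun t : ℝ => f xs + t * (f x - f xs)) (f x - f xs) 0 := by
      simpa using (hasDerivAt_id (0:ℝ)).mul_const (f x - f xs) |>.const_add (f xs)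
    exact this.hasDerivWithinAt
  have hgd : HasDerivWithinAt g (f xs - f x) (Set.Icc (0:ℝ) 1) 0 := by
    have := hfX.sub hγd
    simpa [hg, Pi.sub_def] using this
  -- slope argument
  have hslope : Filter.Tendsto (slope g 0) (nhdsWithin 0 (Set.Icc (0:ℝ) 1 \ {0}))
      (nhds (f xs - f x)) := hasDerivWithinAt_iff_tendsto_slope.mp hgd
  have hdiffset : Set.Icc (0:ℝ) 1 \ {0} = Set.Ioc (0:ℝ) 1 := Set.Icc_diff_left
  rw [hdiffset, nhdsWithin_Ioc_eq_nhdsGT (by norm_num : (0:ℝ) < 1)] at hslope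
  have hpos : ∀ᶠ t in nhdsWithin (0:ℝ) (Set.Ioi 0), 0 < slope g 0 t :=
    hslope.eventually (eventually_gt_nhds (by linarith))
  -- eventually X t ∈ D
  have hXcont : ContinuousWithinAt X (Set.Icc (0:ℝ) 1) 0 := hXdiff.continuousWithinAt
  have hXD : ∀ᶠ t in nhdsWithin (0:ℝ) (Set.Icc 0 1), X t ∈ D := by
    have := hXcont (hD.mem_nhds (by rw [hX0]; exact hxs))
    exact this
  have hXD' : ∀ᶠ t in nhdsWithin (0:ℝ) (Set.Ioi 0), X t ∈ D := by
    rw [← nhdsWithin_Ioc_eq_nhdsGT (by norm_num : (0:ℝ) < 1)]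
    exact Filter.Eventually.filter_mono
      (nhdsWithin_mono 0 (Set.Ioc_subset_Icc_self)) hXD
  have hIoc : ∀ᶠ t in nhdsWithin (0:ℝ) (Set.Ioi 0), t ∈ Set.Ioc (0:ℝ) 1 := by
    rw [← nhdsWithin_Ioc_eq_nhdsGT (by norm_num : (0:ℝ) < 1)]
    exact self_mem_nhdsWithin
  -- derive contradiction
  have hcontr : ∀ᶠ t in nhdsWithin (0:ℝ) (Set.Ioi 0), False := by
    filter_upwards [hpos, hXD', hIoc] with t hp hXt htIoc
    have htIcc : t ∈ Set.Icc (0:ℝ) 1 := Set.Ioc_subset_Icc_self htIoc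
    have hmL := (hcL t htIcc).1
    have hle : f (X t) ≤ (Ψ (c t)).2.1 := key _ hmL hXt
    rw [hγcurve t htIcc] at hle
    have hgle : g t ≤ 0 := by simp only [hg]; linarith
    have hslope_le : slope g 0 t ≤ 0 := by
      have hg0 : g 0 = 0 := by simp [hg, hX0]
      rw [slope_def_field, hg0, sub_zero, sub_zero]
      exact div_nonpos_iff.mpr (Or.inr ⟨hgle, le_of_lt htIoc.1⟩)
    linarith
  have hne : (nhdsWithin (0:ℝ) (Set.Ioi 0)).NeBot := inferInstance
  exact hne.ne (Filter.eventually_false_iff_eq_bot.mp hcontr)
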